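/- Let p > 1 and let q satisfy 1/p + 1/q = 1, let σ ∈ ℝ, and let h and f be nonnegative Lebesgue-measurable functions on (0,∞) such that k(σ) := ∫₀^∞ h(t) t^{σ-1} dt satisfies 0 < k(σ) < ∞. Then ∫₀^∞ y^{pσ-1} (∫₀^∞ h(x·y) f(x) dx)^p dy ≤ k(σ)^p · ∫₀^∞ x^{p(1-σ)-1} f(x)^p dx, as an inequality in [0,∞]. -/

import Mathlib

open MeasureTheory Set

open scoped ENNReal

lemma scaleAux (c : ℝ) (hc : 0 < c) (g : ℝ → ℝ≥0∞) (hg : Measurable g) :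
    ∫⁻ x in Ioi (0:ℝ), g (c * x) = ENNReal.ofReal c⁻¹ * ∫⁻ t in Ioi (0:ℝ), g t := by
  have hm : Measurable fun x : ℝ => c * x := measurable_const_mul c
  have hpre : (fun x : ℝ => c * x) ⁻¹' Ioi 0 = Ioi 0 := by
    ext x; simp [mul_pos_iff_of_pos_left hc]
  calc ∫⁻ x in Ioi (0:ℝ), g (c * x)
      = ∫⁻ y, g y ∂(Measure.map (fun x => c * x) (volume.restrict (Ioi 0))) := by
        rw [lintegral_map hg hm]
    _ = ∫⁻ y, g y ∂((Measure.map (fun x => c * x) volume).restrict (Ioi 0)) := by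
        rw [Measure.restrict_map hm measurableSet_Ioi, hpre]
    _ = ENNReal.ofReal c⁻¹ * ∫⁻ t in Ioi (0:ℝ), g t := by
        rw [Real.map_volume_mul_left hc.ne', Measure.restrict_smul, lintegral_smul_measure,
          abs_of_pos (inv_pos.2 hc), smul_eq_mul]

lemma keyAux (σ : ℝ) (h : ℝ → ℝ) (hh : Measurable h) (hh0 : ∀ t ∈ Ioi (0:ℝ), 0 ≤ h t)
    {y : ℝ} (hy : 0 < y) :
    ∫⁻ x in Ioi (0:ℝ), ENNReal.ofReal (h (x * y)) * ENNReal.ofReal (x ^ (σ - 1))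
      = ENNReal.ofReal (y ^ (-σ)) * ∫⁻ t in Ioi (0:ℝ), ENNReal.ofReal (h t * t ^ (σ - 1)) := by
  set g : ℝ → ℝ≥0∞ := fun t => ENNReal.ofReal (h t) * ENNReal.ofReal (t ^ (σ - 1)) with hgdef
  have hg : Measurable g := (hh.ennreal_ofReal).mul
    ((measurable_id.pow measurable_const).ennreal_ofReal)
  have hK : ∫⁻ t in Ioi (0:ℝ), ENNReal.ofReal (h t * t ^ (σ - 1)) = ∫⁻ t in Ioi (0:ℝ), g t := by
    refine setLIntegral_congr_fun measurableSet_Ioi (fun t ht => ?_)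
    exact ENNReal.ofReal_mul (hh0 t ht)
  have hpt : ∀ x ∈ Ioi (0:ℝ),
      ENNReal.ofReal (h (x * y)) * ENNReal.ofReal (x ^ (σ - 1))
        = ENNReal.ofReal (y ^ (1 - σ)) * g (y * x) := by
    intro x hx
    have hx0 : (0:ℝ) < x := hx
    have hone : ENNReal.ofReal (y ^ (1 - σ)) * ENNReal.ofReal (y ^ (σ - 1)) = 1 := by
      rw [← ENNReal.ofReal_mul (by positivity), ← Real.rpow_add hy]
      norm_num
    simp only [hgdef, mul_comm x y, Real.mul_rpow hy.le hx0.le, ENNReal.ofReal_mul (by positivity : (0:ℝ) ≤ y ^ (σ-1))]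
    calc ENNReal.ofReal (h (y * x)) * ENNReal.ofReal (x ^ (σ - 1))
        = (ENNReal.ofReal (y ^ (1 - σ)) * ENNReal.ofReal (y ^ (σ - 1))) *
            (ENNReal.ofReal (h (y * x)) * ENNReal.ofReal (x ^ (σ - 1))) := by rw [hone, one_mul]
      _ = ENNReal.ofReal (y ^ (1 - σ)) *
          (ENNReal.ofReal (h (y * x)) * (ENNReal.ofReal (y ^ (σ - 1)) * ENNReal.ofReal (x ^ (σ - 1)))) := by ring
  calc ∫⁻ x in Ioi (0:ℝ), ENNReal.ofReal (h (x * y)) * ENNReal.ofReal (x ^ (σ - 1))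
      = ∫⁻ x in Ioi (0:ℝ), ENNReal.ofReal (y ^ (1 - σ)) * g (y * x) :=
        setLIntegral_congr_fun measurableSet_Ioi hpt
    _ = ENNReal.ofReal (y ^ (1 - σ)) * ∫⁻ x in Ioi (0:ℝ), g (y * x) :=
        lintegral_const_mul' _ _ ENNReal.ofReal_ne_top
    _ = ENNReal.ofReal (y ^ (1 - σ)) * (ENNReal.ofReal y⁻¹ * ∫⁻ t in Ioi (0:ℝ), g t) := by
        rw [scaleAux y hy g hg]
    _ = ENNReal.ofReal (y ^ (-σ)) * ∫⁻ t in Ioi (0:ℝ), g t := by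
        rw [← mul_assoc, ← ENNReal.ofReal_mul (by positivity)]
        congr 2
        rw [← Real.rpow_neg_one y, ← Real.rpow_add hy]
        congr 1
        ring
    _ = _ := by rw [hK]


/-- Yang–Hilbert lemma (case `p > 1`): for nonnegative measurable `h`, `f` on `(0,∞)`
with `0 < k(σ) = ∫₀^∞ h(t) t^{σ-1} dt < ∞`, one has
`∫₀^∞ y^{pσ-1} (∫₀^∞ h(xy) f(x) dx)^p dy ≤ k(σ)^p ∫₀^∞ x^{p(1-σ)-1} f(x)^p dx`
as an inequality in `[0,∞]`. -/
theorem stmt0 (p q σ : ℝ) (hp : 1 < p) (hpq : 1 / p + 1 / q = 1)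
    (h f : ℝ → ℝ) (hh : Measurable h) (hf : Measurable f)
    (hh0 : ∀ t ∈ Ioi (0 : ℝ), 0 ≤ h t) (hf0 : ∀ t ∈ Ioi (0 : ℝ), 0 ≤ f t)
    (hk0 : 0 < ∫⁻ t in Ioi (0 : ℝ), ENNReal.ofReal (h t * t ^ (σ - 1)))
    (hk1 : (∫⁻ t in Ioi (0 : ℝ), ENNReal.ofReal (h t * t ^ (σ - 1))) < ⊤) :
    (∫⁻ y in Ioi (0 : ℝ),
        ENNReal.ofReal (y ^ (p * σ - 1)) *
          (∫⁻ x in Ioi (0 : ℝ), ENNReal.ofReal (h (x * y) * f x)) ^ p)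
      ≤ (∫⁻ t in Ioi (0 : ℝ), ENNReal.ofReal (h t * t ^ (σ - 1))) ^ p *
          ∫⁻ x in Ioi (0 : ℝ), ENNReal.ofReal (x ^ (p * (1 - σ) - 1) * f x ^ p) := by
  have hp0 : (0:ℝ) < p := lt_trans one_pos hp
  have hpq' : Real.HolderConjugate p q := Real.holderConjugate_iff.2 ⟨hp, by simpa [one_div] using hpq⟩
  have hq0 : (0:ℝ) < q := hpq'.symm.pos
  have hq_ne : q ≠ 0 := hq0.ne'
  have hpq2 : p / q = p - 1 := hpq'.div_conj_eq_sub_one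
  set K := ∫⁻ t in Ioi (0:ℝ), ENNReal.ofReal (h t * t ^ (σ - 1)) with hKdef
  set e : ℝ := (1 - σ) / q * p with hedef
  set A : ℝ → ℝ≥0∞ := fun y => ∫⁻ x in Ioi (0:ℝ),
      ENNReal.ofReal (h (x * y)) * ENNReal.ofReal (x ^ e * f x ^ p) with hAdef
  -- Hölder step
  have holder : ∀ y ∈ Ioi (0:ℝ),
      (∫⁻ x in Ioi (0:ℝ), ENNReal.ofReal (h (x * y) * f x))
        ≤ (A y) ^ (1/p) * (ENNReal.ofReal (y ^ (-σ)) * K) ^ (1/q) := by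
    intro y hy
    have hy0 : (0:ℝ) < y := hy
    set F : ℝ → ℝ≥0∞ := fun x =>
        ENNReal.ofReal (h (x * y)) ^ (1/p) * ENNReal.ofReal (x ^ ((1-σ)/q) * f x) with hF
    set G : ℝ → ℝ≥0∞ := fun x =>
        ENNReal.ofReal (h (x * y)) ^ (1/q) * ENNReal.ofReal (x ^ ((σ-1)/q)) with hG
    have hHm : Measurable fun x : ℝ => ENNReal.ofReal (h (x * y)) :=
      (hh.comp (measurable_id.mul_const y)).ennreal_ofReal
    have hFm : Measurable F := (hHm.pow measurable_const).mul
      (((measurable_id.pow measurable_const).mul hf).ennreal_ofReal)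
    have hGm : Measurable G := (hHm.pow measurable_const).mul
      ((measurable_id.pow measurable_const).ennreal_ofReal)
    have heq : (∫⁻ x in Ioi (0:ℝ), ENNReal.ofReal (h (x * y) * f x))
        = ∫⁻ x in Ioi (0:ℝ), (F * G) x := by
      refine setLIntegral_congr_fun measurableSet_Ioi (fun x hx => ?_)
      have hx0 : (0:ℝ) < x := hx
      have hxy : 0 ≤ h (x * y) := hh0 _ (mul_pos hx0 hy0)
      have h1 : ENNReal.ofReal (h (x*y)) ^ (1/p) * ENNReal.ofReal (h (x*y)) ^ (1/q)
          = ENNReal.ofReal (h (x*y)) := by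
        rw [← ENNReal.rpow_add_of_nonneg _ _ (by positivity) (by positivity), hpq,
          ENNReal.rpow_one]
      have h2 : x ^ ((1-σ)/q) * f x * x ^ ((σ-1)/q) = f x := by
        rw [mul_right_comm, ← Real.rpow_add hx0,
          show (1-σ)/q + (σ-1)/q = 0 by ring, Real.rpow_zero, one_mul]
      have hfx : 0 ≤ f x := hf0 _ hx0
      simp only [hF, hG, Pi.mul_apply]
      rw [mul_mul_mul_comm, h1,
        ← ENNReal.ofReal_mul (mul_nonneg (by positivity) hfx), h2]
      exact ENNReal.ofReal_mul hxy
    have hFp : (∫⁻ x in Ioi (0:ℝ), F x ^ p) = A y := by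
      simp only [hAdef]
      refine setLIntegral_congr_fun measurableSet_Ioi (fun x hx => ?_)
      have hx0 : (0:ℝ) < x := hx
      have hfx : 0 ≤ f x := hf0 _ hx0
      simp only [hF]
      rw [ENNReal.mul_rpow_of_nonneg _ _ hp0.le, ← ENNReal.rpow_mul,
        one_div, inv_mul_cancel₀ hp0.ne', ENNReal.rpow_one,
        ENNReal.ofReal_rpow_of_nonneg (by positivity) hp0.le,
        Real.mul_rpow (by positivity) (by positivity), ← Real.rpow_mul hx0.le, hedef]
    have hGq : (∫⁻ x in Ioi (0:ℝ), G x ^ q) = ENNReal.ofReal (y ^ (-σ)) * K := by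
      rw [← keyAux σ h hh hh0 hy0]
      refine setLIntegral_congr_fun measurableSet_Ioi (fun x hx => ?_)
      have hx0 : (0:ℝ) < x := hx
      simp only [hG]
      rw [ENNReal.mul_rpow_of_nonneg _ _ hq0.le, ← ENNReal.rpow_mul,
        one_div, inv_mul_cancel₀ hq_ne, ENNReal.rpow_one,
        ENNReal.ofReal_rpow_of_nonneg (by positivity) hq0.le, ← Real.rpow_mul hx0.le,
        div_mul_cancel₀ _ hq_ne]
    calc (∫⁻ x in Ioi (0:ℝ), ENNReal.ofReal (h (x * y) * f x))
        = ∫⁻ x in Ioi (0:ℝ), (F * G) x := heq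
      _ ≤ (∫⁻ x in Ioi (0:ℝ), F x ^ p) ^ (1/p) * (∫⁻ x in Ioi (0:ℝ), G x ^ q) ^ (1/q) :=
          ENNReal.lintegral_mul_le_Lp_mul_Lq _ hpq' hFm.aemeasurable hGm.aemeasurable
      _ = (A y) ^ (1/p) * (ENNReal.ofReal (y ^ (-σ)) * K) ^ (1/q) := by rw [hFp, hGq]
  -- pointwise bound after raising to power p
  have hbound : ∀ y ∈ Ioi (0:ℝ),
      ENNReal.ofReal (y ^ (p*σ-1)) *
          (∫⁻ x in Ioi (0:ℝ), ENNReal.ofReal (h (x*y) * f x)) ^ p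
        ≤ K ^ (p/q) * (ENNReal.ofReal (y ^ (σ-1)) * A y) := by
    intro y hy
    have hy0 : (0:ℝ) < y := hy
    have h1 : (∫⁻ x in Ioi (0:ℝ), ENNReal.ofReal (h (x*y) * f x)) ^ p
        ≤ A y * (ENNReal.ofReal (y^(-σ)) * K) ^ (p/q) := by
      calc (∫⁻ x in Ioi (0:ℝ), ENNReal.ofReal (h (x*y) * f x)) ^ p
          ≤ ((A y)^(1/p) * (ENNReal.ofReal (y^(-σ)) * K)^(1/q))^p :=
            ENNReal.rpow_le_rpow (holder y hy) hp0.le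
        _ = A y * (ENNReal.ofReal (y^(-σ)) * K) ^ (p/q) := by
            rw [ENNReal.mul_rpow_of_nonneg _ _ hp0.le, ← ENNReal.rpow_mul, ← ENNReal.rpow_mul,
              one_div_mul_cancel hp0.ne', ENNReal.rpow_one,
              show 1/q*p = p/q by ring]
    have h2 : ENNReal.ofReal (y^(p*σ-1)) * (A y * (ENNReal.ofReal (y^(-σ)) * K) ^ (p/q))
        = K ^ (p/q) * (ENNReal.ofReal (y^(σ-1)) * A y) := by
      have hexp1 : p*σ-1 + -σ*(p/q) = σ-1 := by rw [hpq2]; ring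
      rw [ENNReal.mul_rpow_of_nonneg _ _ (by positivity),
        ENNReal.ofReal_rpow_of_pos (by positivity), ← Real.rpow_mul hy0.le]
      calc ENNReal.ofReal (y^(p*σ-1)) *
            (A y * (ENNReal.ofReal (y^(-σ*(p/q))) * K^(p/q)))
          = (ENNReal.ofReal (y^(p*σ-1)) * ENNReal.ofReal (y^(-σ*(p/q)))) * K^(p/q) * A y := by
            ring
        _ = K ^ (p/q) * (ENNReal.ofReal (y^(σ-1)) * A y) := by
            rw [← ENNReal.ofReal_mul (by positivity), ← Real.rpow_add hy0, hexp1]; ring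
    exact le_trans (mul_le_mul_right h1 _) (le_of_eq h2)
  -- Tonelli
  have hTon : (∫⁻ y in Ioi (0:ℝ), ENNReal.ofReal (y^(σ-1)) * A y)
      = K * ∫⁻ x in Ioi (0:ℝ), ENNReal.ofReal (x ^ (p * (1 - σ) - 1) * f x ^ p) := by
    have h1 : (∫⁻ y in Ioi (0:ℝ), ENNReal.ofReal (y^(σ-1)) * A y)
        = ∫⁻ y in Ioi (0:ℝ), ∫⁻ x in Ioi (0:ℝ), ENNReal.ofReal (y^(σ-1)) *
            (ENNReal.ofReal (h (x * y)) * ENNReal.ofReal (x ^ e * f x ^ p)) := by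
      refine lintegral_congr fun y => ?_
      simp only [hAdef]
      exact (lintegral_const_mul' _ _ ENNReal.ofReal_ne_top).symm
    have hmeas : AEMeasurable (Function.uncurry fun y x =>
        ENNReal.ofReal (y^(σ-1)) *
            (ENNReal.ofReal (h (x * y)) * ENNReal.ofReal (x ^ e * f x ^ p)))
        ((volume.restrict (Ioi (0:ℝ))).prod (volume.restrict (Ioi (0:ℝ)))) := by
      apply Measurable.aemeasurable
      exact ((measurable_fst.pow measurable_const).ennreal_ofReal).mul
        (((hh.comp (measurable_snd.mul measurable_fst)).ennreal_ofReal).mul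
          (((measurable_snd.pow measurable_const).mul
            ((hf.comp measurable_snd).pow measurable_const)).ennreal_ofReal))
    have h2 : (∫⁻ y in Ioi (0:ℝ), ∫⁻ x in Ioi (0:ℝ), ENNReal.ofReal (y^(σ-1)) *
            (ENNReal.ofReal (h (x * y)) * ENNReal.ofReal (x ^ e * f x ^ p)))
        = ∫⁻ x in Ioi (0:ℝ), ∫⁻ y in Ioi (0:ℝ), ENNReal.ofReal (y^(σ-1)) *
            (ENNReal.ofReal (h (x * y)) * ENNReal.ofReal (x ^ e * f x ^ p)) :=
      lintegral_lintegral_swap hmeas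
    have h3 : ∀ x ∈ Ioi (0:ℝ), (∫⁻ y in Ioi (0:ℝ), ENNReal.ofReal (y^(σ-1)) *
            (ENNReal.ofReal (h (x * y)) * ENNReal.ofReal (x ^ e * f x ^ p)))
        = K * ENNReal.ofReal (x ^ (p * (1 - σ) - 1) * f x ^ p) := by
      intro x hx
      have hx0 : (0:ℝ) < x := hx
      have hexp2 : -σ + e = p*(1-σ)-1 := by
        have he : e = (1-σ)*(p/q) := by rw [hedef]; ring
        rw [he, hpq2]; ring
      calc (∫⁻ y in Ioi (0:ℝ), ENNReal.ofReal (y^(σ-1)) *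
              (ENNReal.ofReal (h (x * y)) * ENNReal.ofReal (x ^ e * f x ^ p)))
          = ∫⁻ y in Ioi (0:ℝ), (ENNReal.ofReal (h (y * x)) * ENNReal.ofReal (y^(σ-1))) *
              ENNReal.ofReal (x ^ e * f x ^ p) := by
            refine setLIntegral_congr_fun measurableSet_Ioi (fun y hy => ?_)
            rw [mul_comm x y]; ring
        _ = (∫⁻ y in Ioi (0:ℝ), ENNReal.ofReal (h (y * x)) * ENNReal.ofReal (y^(σ-1))) *
              ENNReal.ofReal (x ^ e * f x ^ p) :=
            lintegral_mul_const' _ _ ENNReal.ofReal_ne_top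
        _ = (ENNReal.ofReal (x ^ (-σ)) * K) * ENNReal.ofReal (x ^ e * f x ^ p) := by
            rw [keyAux σ h hh hh0 hx0]
        _ = K * ENNReal.ofReal (x ^ (p * (1 - σ) - 1) * f x ^ p) := by
            rw [mul_comm (ENNReal.ofReal (x ^ (-σ))) K, mul_assoc,
              ← ENNReal.ofReal_mul (by positivity), ← mul_assoc (x ^ (-σ)),
              ← Real.rpow_add hx0, hexp2]
    rw [h1, h2, setLIntegral_congr_fun measurableSet_Ioi h3,
      lintegral_const_mul' _ _ hk1.ne]
  -- put everything together
  have hKtop : K ^ (p/q) ≠ ⊤ := ENNReal.rpow_ne_top_of_nonneg (by positivity) hk1.ne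
  have hps : p/q + 1 = p := by rw [hpq2]; ring
  calc (∫⁻ y in Ioi (0:ℝ), ENNReal.ofReal (y ^ (p * σ - 1)) *
          (∫⁻ x in Ioi (0:ℝ), ENNReal.ofReal (h (x * y) * f x)) ^ p)
      ≤ ∫⁻ y in Ioi (0:ℝ), K ^ (p/q) * (ENNReal.ofReal (y^(σ-1)) * A y) :=
        lintegral_mono_ae ((ae_restrict_iff' measurableSet_Ioi).2 (ae_of_all _ hbound))
    _ = K ^ (p/q) * ∫⁻ y in Ioi (0:ℝ), ENNReal.ofReal (y^(σ-1)) * A y :=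
        lintegral_const_mul' _ _ hKtop
    _ = K ^ (p/q) * (K * ∫⁻ x in Ioi (0:ℝ), ENNReal.ofReal (x ^ (p * (1 - σ) - 1) * f x ^ p)) := by
        rw [hTon]
    _ = K ^ p * ∫⁻ x in Ioi (0:ℝ), ENNReal.ofReal (x ^ (p * (1 - σ) - 1) * f x ^ p) := by
        rw [← mul_assoc]
        congr 1
        nth_rewrite 2 [← ENNReal.rpow_one K]
        rw [← ENNReal.rpow_add _ _ hk0.ne' hk1.ne, hps]
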